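/- Let {x, α, y} satisfy the cone Frenet formulas with constant cone curvature κ = κ₀. Then for the xy-Smarandache curve γ = (1/√(2cb))(cx + by) with c - bκ₀ ≠ 0, the cone curvature of γ is the constant 2bcκ₀/(c - bκ₀)². In particular, xy-Smarandache curves of curves with constant cone curvature again have constant cone curvature. -/
import Mathlib


noncomputable def mink (X Y : ℝ × ℝ × ℝ) : ℝ :=
  X.1 * Y.1 + X.2.1 * Y.2.1 - X.2.2 * Y.2.2

lemma mink_smul_self (r : ℝ) (V : ℝ × ℝ × ℝ) :
    mink (r • V) (r • V) = r ^ 2 * mink V V := by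
  simp [mink, Prod.smul_fst, Prod.smul_snd, smul_eq_mul]; ring

lemma mink_expand (a : ℝ) (X Y : ℝ × ℝ × ℝ) :
    mink (a • X - Y) (a • X - Y) =
      a ^ 2 * mink X X - 2 * a * mink X Y + mink Y Y := by
  simp [mink, Prod.smul_fst, Prod.smul_snd, smul_eq_mul]; ring

theorem stmt18 (x α y : ℝ → ℝ × ℝ × ℝ) (κ₀ : ℝ)
    (hx : ∀ s, HasDerivAt x (α s) s)
    (hα : ∀ s, HasDerivAt α (κ₀ • x s - y s) s)
    (hy : ∀ s, HasDerivAt y (-κ₀ • α s) s)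
    (hframe : ∀ s, mink (x s) (x s) = 0 ∧ mink (y s) (y s) = 0 ∧
      mink (x s) (α s) = 0 ∧ mink (y s) (α s) = 0 ∧
      mink (x s) (y s) = 1 ∧ mink (α s) (α s) = 1)
    (b c : ℝ) (hb : 0 < b) (hc : 0 < c) (hne : c - b * κ₀ ≠ 0)
    (γ : ℝ → ℝ × ℝ × ℝ)
    (hγ : ∀ s, γ s = (1 / Real.sqrt (2 * c * b)) • (c • x s + b • y s))
    (σ : ℝ → ℝ)
    (hσ : ∀ s, HasDerivAt σ ((c - b * κ₀) / Real.sqrt (2 * c * b)) s)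
    (Γ Γ' Γ'' : ℝ → ℝ × ℝ × ℝ)
    (hΓγ : ∀ s, Γ (σ s) = γ s)
    (hΓ' : ∀ t, HasDerivAt Γ (Γ' t) t)
    (hΓ'' : ∀ t, HasDerivAt Γ' (Γ'' t) t) :
    ∀ s, -(1 / 2) * mink (Γ'' (σ s)) (Γ'' (σ s)) =
      2 * b * c * κ₀ / (c - b * κ₀) ^ 2 := by
  set k : ℝ := 1 / Real.sqrt (2 * c * b) with hk
  set m : ℝ := (c - b * κ₀) / Real.sqrt (2 * c * b) with hmdef
  have h2cb : (0:ℝ) < 2 * c * b := by positivity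
  have hs : Real.sqrt (2 * c * b) ≠ 0 := ne_of_gt (Real.sqrt_pos.mpr h2cb)
  have hm : m ≠ 0 := div_ne_zero hne hs
  -- first derivative
  have hΓ's : ∀ s, Γ' (σ s) = α s := by
    intro s
    have h1 : HasDerivAt (Γ ∘ σ) (m • Γ' (σ s)) s := (hΓ' (σ s)).scomp s (hσ s)
    have h1' : HasDerivAt γ (m • Γ' (σ s)) s := by
      apply h1.congr_of_eventuallyEq
      exact Filter.Eventually.of_forall fun t => (hΓγ t).symm
    have hg : HasDerivAt (fun t => k • (c • x t + b • y t))
        (k • (c • α s + b • ((-κ₀) • α s))) s :=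
      (((hx s).const_smul c).add ((hy s).const_smul b)).const_smul k
    have h2 : HasDerivAt γ (m • α s) s := by
      have hfun : (fun t => k • (c • x t + b • y t)) = γ := funext fun t => (hγ t).symm
      have hval : k • (c • α s + b • ((-κ₀) • α s)) = m • α s := by
        rw [smul_add, smul_smul, smul_smul, smul_smul, ← add_smul]
        congr 1
        rw [hk, hmdef]
        field_simp
        ring
      rw [← hfun, ← hval]; exact hg
    have := h1'.unique h2
    exact smul_right_injective _ hm this
  -- second derivative
  have hΓ''s : ∀ s, m • Γ'' (σ s) = κ₀ • x s - y s := by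
    intro s
    have h1 : HasDerivAt (Γ' ∘ σ) (m • Γ'' (σ s)) s := (hΓ'' (σ s)).scomp s (hσ s)
    have h1' : HasDerivAt α (m • Γ'' (σ s)) s := by
      apply h1.congr_of_eventuallyEq
      exact Filter.Eventually.of_forall fun t => (hΓ's t).symm
    exact h1'.unique (hα s)
  intro s
  obtain ⟨hxx, hyy, hxα, hyα, hxy, hαα⟩ := hframe s
  have key : Γ'' (σ s) = m⁻¹ • (κ₀ • x s - y s) := by
    rw [← hΓ''s s, smul_smul, inv_mul_cancel₀ hm, one_smul]
  rw [key, mink_smul_self, mink_expand, hxx, hyy, hxy]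
  have hsq : Real.sqrt (2 * c * b) ^ 2 = 2 * c * b := Real.sq_sqrt h2cb.le
  have hm2 : m⁻¹ ^ 2 = 2 * c * b / (c - b * κ₀) ^ 2 := by
    rw [inv_pow, hmdef, div_pow, hsq, inv_div]
  rw [hm2]
  field_simp
  ring
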